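/- Let E11 ∈ ℝ^{n1×n1} be invertible, A12 ∈ ℝ^{n1×n2} have full column rank with A12ᵀE11⁻¹A12 invertible, Π = I_{n1} − A12(A12ᵀE11⁻¹A12)⁻¹A12ᵀE11⁻¹, R = I_{n1} − A12(A12ᵀA12)⁻¹A12ᵀ, and let Ĩ ∈ ℝ^{n1×(n1−n2)} satisfy that RĨ has full column rank. Let k be a positive integer, L ∈ ℝ^{n1^k×n1^k}, and b ∈ ℝ^{n1^k}. If a vector ŵ ∈ ℝ^{n1^k} satisfies (Πᵀ)^{⊗k} ŵ = ŵ and Π^{⊗k}(L ŵ − b) = 0, then M_k^{Ĩ}(A12)ᵀ ŵ = 0 and there exists a vector Ω such that L ŵ + M_k^{Ĩ}(A12) Ω = b; i.e. (ŵ, Ω) solves the augmented saddle-point system [[L, M_k^{Ĩ}(A12)], [M_k^{Ĩ}(A12)ᵀ, 0]] (ŵ, Ω) = (b, 0). -/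
import Mathlib


open Matrix

noncomputable section

/-- Position-dependent Kronecker product of square matrices: the entry at
row `r` and column `c` is `∏ j, F j (r j) (c j)`. -/
def posKron {n k : ℕ} (F : Fin k → Matrix (Fin n) (Fin n) ℝ) :
    Matrix (Fin k → Fin n) (Fin k → Fin n) ℝ :=
  Matrix.of fun r c => ∏ j, F j (r j) (c j)

/-- The `k`-fold Kronecker power `X^{⊗k}`. -/
def kronPow {n : ℕ} (k : ℕ) (X : Matrix (Fin n) (Fin n) ℝ) :
    Matrix (Fin k → Fin n) (Fin k → Fin n) ℝ :=
  posKron fun _ => X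

/-- Number of columns of the `j`-th Kronecker factor in the `i`-th block of `M_k^B(A)`. -/
def mCol (q p n : ℕ) {k : ℕ} (i j : Fin k) : ℕ :=
  if j < i then q else if j = i then p else n

/-- The `i`-th block `B^{⊗(i-1)} ⊗ A ⊗ I_n^{⊗(k-i)}` of `M_k^B(A)`. -/
def mBlock {n p q k : ℕ} (B : Matrix (Fin n) (Fin q) ℝ) (A : Matrix (Fin n) (Fin p) ℝ)
    (i : Fin k) : Matrix (Fin k → Fin n) (∀ j : Fin k, Fin (mCol q p n i j)) ℝ :=
  Matrix.of fun r c => ∏ j : Fin k,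
    if h1 : j < i then B (r j) (Fin.cast (by simp [mCol, h1]) (c j))
    else if h2 : j = i then A (r j) (Fin.cast (by simp [mCol, h1, h2]) (c j))
    else (1 : Matrix (Fin n) (Fin n) ℝ) (r j) (Fin.cast (by simp [mCol, h1, h2]) (c j))

/-- The horizontal block concatenation `M_k^B(A)`, with blocks indexed by `i : Fin k`. -/
def mFull {n p q : ℕ} (k : ℕ) (B : Matrix (Fin n) (Fin q) ℝ) (A : Matrix (Fin n) (Fin p) ℝ) :
    Matrix (Fin k → Fin n) (Σ i : Fin k, ∀ j : Fin k, Fin (mCol q p n i j)) ℝ :=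
  Matrix.of fun r c => mBlock B A c.1 r c.2

/-! ### Auxiliary lemmas -/

lemma isUnit_of_rank_eq {m : ℕ} (M : Matrix (Fin m) (Fin m) ℝ) (h : M.rank = m) : IsUnit M := by
  rw [Matrix.isUnit_iff_isUnit_det, isUnit_iff_ne_zero]
  intro h0
  obtain ⟨v, hv, hMv⟩ := (Matrix.exists_mulVec_eq_zero_iff).mpr h0
  have hker : v ∈ LinearMap.ker M.mulVecLin := by
    simpa [Matrix.mulVecLin] using hMv
  have hrn := LinearMap.finrank_range_add_finrank_ker M.mulVecLin
  rw [Module.finrank_pi] at hrn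
  have hrank : M.rank = Module.finrank ℝ (LinearMap.range M.mulVecLin) := rfl
  rw [← hrank, h, Fintype.card_fin] at hrn
  have hker0 : Module.finrank ℝ (LinearMap.ker M.mulVecLin) = 0 := by omega
  rw [Submodule.finrank_eq_zero] at hker0
  rw [hker0, Submodule.mem_bot] at hker
  exact hv hker

/-- A symmetric idempotent `R` whose trace is `m`, such that `R * U = U` for an `n × m` matrix
`U` with `Uᵀ * U` invertible, equals the orthogonal projector onto the range of `U`. -/
lemma proj_eq {n m : ℕ} (R : Matrix (Fin n) (Fin n) ℝ) (U : Matrix (Fin n) (Fin m) ℝ)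
    (hRsymm : Rᵀ = R) (hRR : R * R = R) (htrR : Matrix.trace R = (m : ℝ))
    (hRU : R * U = U) (hT : IsUnit (Uᵀ * U)) :
    R = U * (Uᵀ * U)⁻¹ * Uᵀ := by
  have hdT : IsUnit (Uᵀ * U).det := (Matrix.isUnit_iff_isUnit_det _).mp hT
  have hUR : Uᵀ * R = Uᵀ := by rw [← hRsymm, ← Matrix.transpose_mul, hRU]
  have hTT : (Uᵀ * U)ᵀ = Uᵀ * U := by rw [Matrix.transpose_mul, Matrix.transpose_transpose]
  have hPmsymm : (U * (Uᵀ * U)⁻¹ * Uᵀ)ᵀ = U * (Uᵀ * U)⁻¹ * Uᵀ := by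
    rw [Matrix.mul_assoc, Matrix.transpose_mul, Matrix.transpose_mul,
      Matrix.transpose_transpose, Matrix.transpose_nonsing_inv, hTT, Matrix.mul_assoc]
  have hRPm : R * (U * (Uᵀ * U)⁻¹ * Uᵀ) = U * (Uᵀ * U)⁻¹ * Uᵀ := by
    rw [← Matrix.mul_assoc, ← Matrix.mul_assoc, hRU]
  have hPmR : U * (Uᵀ * U)⁻¹ * Uᵀ * R = U * (Uᵀ * U)⁻¹ * Uᵀ := by
    rw [Matrix.mul_assoc ((U * (Uᵀ * U)⁻¹)) Uᵀ R, hUR]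
  have hPmPm : (U * (Uᵀ * U)⁻¹ * Uᵀ) * (U * (Uᵀ * U)⁻¹ * Uᵀ) = U * (Uᵀ * U)⁻¹ * Uᵀ := by
    calc (U * (Uᵀ * U)⁻¹ * Uᵀ) * (U * (Uᵀ * U)⁻¹ * Uᵀ)
        = U * ((Uᵀ * U)⁻¹ * (Uᵀ * U * ((Uᵀ * U)⁻¹ * Uᵀ))) := by
          simp only [Matrix.mul_assoc]
      _ = U * (Uᵀ * U)⁻¹ * Uᵀ := by
          rw [← Matrix.mul_assoc (Uᵀ * U)⁻¹, Matrix.nonsing_inv_mul _ hdT, Matrix.one_mul,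
            Matrix.mul_assoc]
  have htrP : Matrix.trace (U * (Uᵀ * U)⁻¹ * Uᵀ) = (m : ℝ) := by
    rw [Matrix.mul_assoc, Matrix.trace_mul_comm, Matrix.mul_assoc,
      Matrix.nonsing_inv_mul _ hdT, Matrix.trace_one, Fintype.card_fin]
  set Pm := U * (Uᵀ * U)⁻¹ * Uᵀ
  have htrM : Matrix.trace (R - Pm) = 0 := by
    rw [Matrix.trace_sub, htrR, htrP, sub_self]
  have hMM : (R - Pm) * (R - Pm) = R - Pm := by
    rw [Matrix.sub_mul, Matrix.mul_sub, Matrix.mul_sub, hRR, hRPm, hPmR, hPmPm]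
    abel
  have hMsymm : (R - Pm)ᵀ = R - Pm := by rw [Matrix.transpose_sub, hRsymm, hPmsymm]
  have hM0 : R - Pm = 0 := by
    have hMT : (R - Pm)ᵀ * (R - Pm) = R - Pm := by rw [hMsymm, hMM]
    have h1 : ∑ i, ∑ j, ((R - Pm) j i) ^ 2 = 0 := by
      have h2 : Matrix.trace ((R - Pm)ᵀ * (R - Pm)) = ∑ i, ∑ j, ((R - Pm) j i) ^ 2 := by
        simp [Matrix.trace, Matrix.diag, Matrix.mul_apply, Matrix.transpose_apply, sq]
      rw [hMT, htrM] at h2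
      exact h2.symm
    ext i j
    have h2 := (Finset.sum_eq_zero_iff_of_nonneg
      (fun i _ => Finset.sum_nonneg fun j _ => sq_nonneg _)).mp h1 j (Finset.mem_univ j)
    have h3 := (Finset.sum_eq_zero_iff_of_nonneg
      (fun j _ => sq_nonneg _)).mp h2 i (Finset.mem_univ i)
    simpa using pow_eq_zero_iff (n := 2) (by norm_num) |>.mp h3
  exact sub_eq_zero.mp hM0

/-- Existence of the decomposition `1 = Itil * D + A12 * C` with `D * A12 = 0`,
adapted to the projector `Proj`. -/
theorem exists_decomp {n1 n2 : ℕ} (E11 : Matrix (Fin n1) (Fin n1) ℝ)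
    (A12 : Matrix (Fin n1) (Fin n2) ℝ) (hA : A12.rank = n2)
    (hS : IsUnit (A12ᵀ * E11⁻¹ * A12))
    (Proj : Matrix (Fin n1) (Fin n1) ℝ)
    (hProj : Proj = 1 - A12 * (A12ᵀ * E11⁻¹ * A12)⁻¹ * A12ᵀ * E11⁻¹)
    (R : Matrix (Fin n1) (Fin n1) ℝ)
    (hR : R = 1 - A12 * (A12ᵀ * A12)⁻¹ * A12ᵀ)
    (Itil : Matrix (Fin n1) (Fin (n1 - n2)) ℝ)
    (hItil : (R * Itil).rank = n1 - n2) :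
    ∃ D : Matrix (Fin (n1 - n2)) (Fin n1) ℝ, ∃ C : Matrix (Fin n2) (Fin n1) ℝ,
      A12 * C = 1 - Itil * D ∧ (Itil * D) * Proj = Itil * D ∧ Proj * A12 = 0 := by
  have hn21 : n2 ≤ n1 := hA ▸ Matrix.rank_le_height A12
  have hdS : IsUnit (A12ᵀ * E11⁻¹ * A12).det := (Matrix.isUnit_iff_isUnit_det _).mp hS
  have hq : IsUnit (A12ᵀ * A12) := by
    apply isUnit_of_rank_eq
    rw [Matrix.rank_transpose_mul_self, hA]
  have hdq : IsUnit (A12ᵀ * A12).det := (Matrix.isUnit_iff_isUnit_det _).mp hq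
  have hPA : Proj * A12 = 0 := by
    rw [hProj, Matrix.sub_mul, Matrix.one_mul]
    simp only [Matrix.mul_assoc]
    rw [← Matrix.mul_assoc A12ᵀ E11⁻¹ A12, Matrix.nonsing_inv_mul _ hdS, Matrix.mul_one, sub_self]
  have hRA : R * A12 = 0 := by
    rw [hR, Matrix.sub_mul, Matrix.one_mul]
    simp only [Matrix.mul_assoc]
    rw [Matrix.nonsing_inv_mul _ hdq, Matrix.mul_one, sub_self]
  have hqT : (A12ᵀ * A12)ᵀ = A12ᵀ * A12 := by
    rw [Matrix.transpose_mul, Matrix.transpose_transpose]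
  have hRsymm : Rᵀ = R := by
    rw [hR]
    simp [Matrix.transpose_sub, Matrix.transpose_mul, Matrix.transpose_nonsing_inv, hqT,
      Matrix.mul_assoc]
  have hRR : R * R = R := by
    nth_rewrite 2 [hR]
    rw [Matrix.mul_sub, Matrix.mul_one, ← Matrix.mul_assoc, ← Matrix.mul_assoc, hRA,
      Matrix.zero_mul, Matrix.zero_mul, sub_zero]
  have htr1 : Matrix.trace (A12 * (A12ᵀ * A12)⁻¹ * A12ᵀ) = (n2 : ℝ) := by
    rw [Matrix.mul_assoc, Matrix.trace_mul_comm, Matrix.mul_assoc,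
      Matrix.nonsing_inv_mul _ hdq, Matrix.trace_one, Fintype.card_fin]
  have htrR : Matrix.trace R = ((n1 - n2 : ℕ) : ℝ) := by
    rw [hR, Matrix.trace_sub, Matrix.trace_one, Fintype.card_fin, htr1, Nat.cast_sub hn21]
  have hT : IsUnit ((R * Itil)ᵀ * (R * Itil)) := by
    apply isUnit_of_rank_eq
    rw [Matrix.rank_transpose_mul_self, hItil]
  have hRU : R * (R * Itil) = R * Itil := by rw [← Matrix.mul_assoc, hRR]
  have hRPm := proj_eq R (R * Itil) hRsymm hRR htrR hRU hT
  refine ⟨((R * Itil)ᵀ * (R * Itil))⁻¹ * (R * Itil)ᵀ,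
    (A12ᵀ * A12)⁻¹ * A12ᵀ * (1 - Itil * (((R * Itil)ᵀ * (R * Itil))⁻¹ * (R * Itil)ᵀ)),
    ?_, ?_, hPA⟩
  · have hRID : R * (1 - Itil * (((R * Itil)ᵀ * (R * Itil))⁻¹ * (R * Itil)ᵀ)) = 0 := by
      rw [Matrix.mul_sub, Matrix.mul_one, ← Matrix.mul_assoc, ← Matrix.mul_assoc, ← hRPm,
        sub_self]
    have h1R : A12 * (A12ᵀ * A12)⁻¹ * A12ᵀ = 1 - R := by rw [hR]; abel
    calc A12 * ((A12ᵀ * A12)⁻¹ * A12ᵀ *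
          (1 - Itil * (((R * Itil)ᵀ * (R * Itil))⁻¹ * (R * Itil)ᵀ)))
        = A12 * (A12ᵀ * A12)⁻¹ * A12ᵀ *
          (1 - Itil * (((R * Itil)ᵀ * (R * Itil))⁻¹ * (R * Itil)ᵀ)) := by
          simp only [Matrix.mul_assoc]
      _ = (1 - R) * (1 - Itil * (((R * Itil)ᵀ * (R * Itil))⁻¹ * (R * Itil)ᵀ)) := by rw [h1R]
      _ = 1 - Itil * (((R * Itil)ᵀ * (R * Itil))⁻¹ * (R * Itil)ᵀ) := by
          rw [Matrix.sub_mul, Matrix.one_mul, hRID, sub_zero]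
  · have hUA : (R * Itil)ᵀ * A12 = 0 := by
      rw [Matrix.transpose_mul, Matrix.mul_assoc, hRsymm, hRA, Matrix.mul_zero]
    rw [hProj, Matrix.mul_sub, Matrix.mul_one]
    have h0 : Itil * (((R * Itil)ᵀ * (R * Itil))⁻¹ * (R * Itil)ᵀ) *
        (A12 * (A12ᵀ * E11⁻¹ * A12)⁻¹ * A12ᵀ * E11⁻¹) = 0 := by
      calc Itil * (((R * Itil)ᵀ * (R * Itil))⁻¹ * (R * Itil)ᵀ) *
            (A12 * (A12ᵀ * E11⁻¹ * A12)⁻¹ * A12ᵀ * E11⁻¹)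
          = Itil * (((R * Itil)ᵀ * (R * Itil))⁻¹ * (((R * Itil)ᵀ * A12) *
              ((A12ᵀ * E11⁻¹ * A12)⁻¹ * (A12ᵀ * E11⁻¹)))) := by
            simp only [Matrix.mul_assoc]
        _ = 0 := by rw [hUA, Matrix.zero_mul, Matrix.mul_zero, Matrix.mul_zero]
    rw [h0, sub_zero]

lemma sum_mul_prod {k : ℕ} {δ : Fin k → Type*} [∀ j, Fintype (δ j)] (f g : ∀ j, δ j → ℝ) :
    ∑ c : (∀ j, δ j), (∏ j, f j (c j)) * (∏ j, g j (c j)) = ∏ j, ∑ a, f j a * g j a := by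
  simp only [← Finset.prod_mul_distrib]
  rw [Finset.prod_univ_sum, Fintype.piFinset_univ]

lemma posKron_mul {n k : ℕ} (F G : Fin k → Matrix (Fin n) (Fin n) ℝ) :
    posKron F * posKron G = posKron (fun j => F j * G j) := by
  ext r c
  simp only [posKron, Matrix.mul_apply, Matrix.of_apply]
  exact sum_mul_prod (fun j t => F j (r j) t) (fun j t => G j t (c j))

lemma kronPow_mul {n k : ℕ} (X Y : Matrix (Fin n) (Fin n) ℝ) :
    kronPow k X * kronPow k Y = kronPow k (X * Y) :=
  posKron_mul _ _

lemma kronPow_one {n k : ℕ} : kronPow k (1 : Matrix (Fin n) (Fin n) ℝ) = 1 := by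
  ext r c
  simp only [kronPow, posKron, Matrix.of_apply]
  by_cases h : r = c
  · subst h; simp [Matrix.one_apply]
  · rw [Matrix.one_apply_ne h]
    obtain ⟨j, hj⟩ := Function.ne_iff.mp h
    exact Finset.prod_eq_zero (Finset.mem_univ j) (Matrix.one_apply_ne hj)

/-- The `j`-th factor of the `i`-th block of `M_k^B(A)`, as a scalar-valued function. -/
def bfac {n p q k : ℕ} (B : Matrix (Fin n) (Fin q) ℝ) (A : Matrix (Fin n) (Fin p) ℝ)
    (i j : Fin k) (a : Fin (mCol q p n i j)) (t : Fin n) : ℝ :=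
  if h1 : j < i then B t (Fin.cast (by simp [mCol, h1]) a)
  else if h2 : j = i then A t (Fin.cast (by simp [mCol, h1, h2]) a)
  else (1 : Matrix (Fin n) (Fin n) ℝ) t (Fin.cast (by simp [mCol, h1, h2]) a)

lemma mBlock_eq {n p q k : ℕ} (B : Matrix (Fin n) (Fin q) ℝ) (A : Matrix (Fin n) (Fin p) ℝ)
    (i : Fin k) (r : Fin k → Fin n) (c : ∀ j : Fin k, Fin (mCol q p n i j)) :
    mBlock B A i r c = ∏ j, bfac B A i j (c j) (r j) := rfl

lemma bfac_self {n p q k : ℕ} (B : Matrix (Fin n) (Fin q) ℝ) (A : Matrix (Fin n) (Fin p) ℝ)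
    (i : Fin k) (a : Fin (mCol q p n i i)) (t : Fin n) :
    bfac B A i i a t = A t (Fin.cast (by simp [mCol]) a) := by
  simp [bfac]

/-- The `j`-th factor of the `i`-th block of the auxiliary right factor. -/
def gfac {n p q k : ℕ} (D : Matrix (Fin q) (Fin n) ℝ) (C : Matrix (Fin p) (Fin n) ℝ)
    (i j : Fin k) (a : Fin (mCol q p n i j)) (t : Fin n) : ℝ :=
  if h1 : j < i then D (Fin.cast (by simp [mCol, h1]) a) t
  else if h2 : j = i then C (Fin.cast (by simp [mCol, h1, h2]) a) t
  else (1 : Matrix (Fin n) (Fin n) ℝ) (Fin.cast (by simp [mCol, h1, h2]) a) t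

lemma sum_bfac_gfac {n p q k : ℕ} (B : Matrix (Fin n) (Fin q) ℝ) (A : Matrix (Fin n) (Fin p) ℝ)
    (D : Matrix (Fin q) (Fin n) ℝ) (C : Matrix (Fin p) (Fin n) ℝ)
    (i j : Fin k) (t u : Fin n) :
    ∑ a : Fin (mCol q p n i j), bfac B A i j a t * gfac D C i j a u
      = (if j < i then B * D else if j = i then A * C else 1) t u := by
  by_cases h1 : j < i
  · simp only [bfac, gfac, dif_pos h1, if_pos h1, Matrix.mul_apply]
    exact Fintype.sum_equiv (finCongr (by simp [mCol, h1])) _ _ (fun a => rfl)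
  · by_cases h2 : j = i
    · simp only [bfac, gfac, dif_neg h1, dif_pos h2, if_neg h1, if_pos h2, Matrix.mul_apply]
      exact Fintype.sum_equiv (finCongr (by simp [mCol, h1, h2])) _ _ (fun a => rfl)
    · simp only [bfac, gfac, dif_neg h1, dif_neg h2, if_neg h1, if_neg h2]
      exact (Fintype.sum_equiv (finCongr (show mCol q p n i j = n by simp [mCol, h1, h2])) _
        (fun x : Fin n => (1 : Matrix (Fin n) (Fin n) ℝ) t x * (1 : Matrix (Fin n) (Fin n) ℝ) x u)
        (fun a => rfl)).trans (by rw [← Matrix.mul_apply, Matrix.one_mul])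

lemma block_mul_g {n p q k : ℕ} (B : Matrix (Fin n) (Fin q) ℝ) (A : Matrix (Fin n) (Fin p) ℝ)
    (D : Matrix (Fin q) (Fin n) ℝ) (C : Matrix (Fin p) (Fin n) ℝ)
    (i : Fin k) (r s : Fin k → Fin n) :
    ∑ c : (∀ j : Fin k, Fin (mCol q p n i j)),
        mBlock B A i r c * ∏ j, gfac D C i j (c j) (s j)
      = ∏ j, (if j < i then B * D else if j = i then A * C else 1) (r j) (s j) := by
  simp only [mBlock_eq]
  rw [sum_mul_prod (fun j a => bfac B A i j a (r j)) (fun j a => gfac D C i j a (s j))]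
  exact Finset.prod_congr rfl fun j _ => sum_bfac_gfac B A D C i j (r j) (s j)

lemma block_mul_kron {n p q k : ℕ} (B : Matrix (Fin n) (Fin q) ℝ) (A : Matrix (Fin n) (Fin p) ℝ)
    (X : Matrix (Fin n) (Fin n) ℝ) (i : Fin k) (c : ∀ j : Fin k, Fin (mCol q p n i j))
    (s : Fin k → Fin n) :
    ∑ r : Fin k → Fin n, mBlock B A i r c * kronPow k X r s
      = ∏ j, ∑ t, bfac B A i j (c j) t * X t (s j) := by
  simp only [mBlock_eq, kronPow, posKron, Matrix.of_apply]
  exact sum_mul_prod (fun j t => bfac B A i j (c j) t) (fun j t => X t (s j))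

lemma telescope {n k : ℕ} (P Q : Matrix (Fin n) (Fin n) ℝ) (hQ : Q = 1 - P) :
    (∑ i : Fin k, posKron (fun j => if j < i then P else if j = i then Q else 1))
      = 1 - kronPow k P := by
  have key : ∀ i : Fin k,
      posKron (fun j => if j < i then P else if j = i then Q else (1 : Matrix (Fin n) (Fin n) ℝ))
        = posKron (fun j : Fin k => if (j : ℕ) < (i : ℕ) then P else 1)
          - posKron (fun j : Fin k => if (j : ℕ) < (i : ℕ) + 1 then P else 1) := by
    intro i
    ext r c
    simp only [posKron, Matrix.of_apply, Matrix.sub_apply]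
    rw [Finset.prod_eq_mul_prod_sdiff_singleton_of_mem (Finset.mem_univ i)
        (fun j => (if j < i then P else if j = i then Q else 1) (r j) (c j)),
      Finset.prod_eq_mul_prod_sdiff_singleton_of_mem (Finset.mem_univ i)
        (fun j => (if (j : ℕ) < (i : ℕ) then P else 1) (r j) (c j)),
      Finset.prod_eq_mul_prod_sdiff_singleton_of_mem (Finset.mem_univ i)
        (fun j => (if (j : ℕ) < (i : ℕ) + 1 then P else 1) (r j) (c j))]
    have e1 : ∀ j ∈ Finset.univ \ {i},
        (if (j : ℕ) < (i : ℕ) then P else (1 : Matrix (Fin n) (Fin n) ℝ)) (r j) (c j)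
          = (if j < i then P else if j = i then Q else 1) (r j) (c j) := by
      intro j hj
      rw [Finset.mem_sdiff, Finset.mem_singleton] at hj
      by_cases h : j < i
      · rw [if_pos (Fin.lt_def.mp h), if_pos h]
      · rw [if_neg (fun hc => h (Fin.lt_def.mpr hc)), if_neg h, if_neg hj.2]
    have e2 : ∀ j ∈ Finset.univ \ {i},
        (if (j : ℕ) < (i : ℕ) + 1 then P else (1 : Matrix (Fin n) (Fin n) ℝ)) (r j) (c j)
          = (if j < i then P else if j = i then Q else 1) (r j) (c j) := by
      intro j hj
      rw [Finset.mem_sdiff, Finset.mem_singleton] at hj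
      have hne : (j : ℕ) ≠ (i : ℕ) := fun hc => hj.2 (Fin.ext hc)
      by_cases h : j < i
      · rw [if_pos (Nat.lt_succ_of_lt (Fin.lt_def.mp h)), if_pos h]
      · have h' : ¬ ((j : ℕ) < (i : ℕ)) := fun hc => h (Fin.lt_def.mpr hc)
        rw [if_neg (by omega), if_neg h, if_neg hj.2]
    rw [Finset.prod_congr rfl e1, Finset.prod_congr rfl e2]
    rw [if_neg (lt_irrefl i), if_pos rfl, if_neg (lt_irrefl (i : ℕ)),
      if_pos (Nat.lt_succ_self (i : ℕ))]
    rw [hQ, Matrix.sub_apply, sub_mul, Matrix.one_apply]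
  calc (∑ i : Fin k, posKron fun j => if j < i then P else if j = i then Q else 1)
      = ∑ i : Fin k, (posKron (fun j : Fin k => if (j : ℕ) < (i : ℕ) then P else 1)
          - posKron (fun j : Fin k => if (j : ℕ) < (i : ℕ) + 1 then P else 1)) :=
        Finset.sum_congr rfl fun i _ => key i
    _ = ∑ m ∈ Finset.range k, (posKron (fun j : Fin k => if (j : ℕ) < m then P else 1)
          - posKron (fun j : Fin k => if (j : ℕ) < m + 1 then P else 1)) :=
        Fin.sum_univ_eq_sum_range (fun m => posKron (fun j : Fin k => if (j : ℕ) < m then P else 1)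
          - posKron (fun j : Fin k => if (j : ℕ) < m + 1 then P else (1 : Matrix (Fin n) (Fin n) ℝ))) k
    _ = posKron (fun j : Fin k => if (j : ℕ) < 0 then P else 1)
          - posKron (fun j : Fin k => if (j : ℕ) < k then P else 1) :=
        Finset.sum_range_sub' (fun m => posKron
          (fun j : Fin k => if (j : ℕ) < m then P else (1 : Matrix (Fin n) (Fin n) ℝ))) k
    _ = 1 - kronPow k P := by
        congr 1
        · rw [show (fun j : Fin k => if (j : ℕ) < 0 then P else (1 : Matrix (Fin n) (Fin n) ℝ))
              = fun _ => 1 from funext fun j => if_neg (Nat.not_lt_zero _)]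
          exact kronPow_one
        · rw [show (fun j : Fin k => if (j : ℕ) < k then P else (1 : Matrix (Fin n) (Fin n) ℝ))
              = fun _ => P from funext fun j => if_pos j.isLt]
          rfl

/-- With `Π = I - A12 (A12ᵀ E11⁻¹ A12)⁻¹ A12ᵀ E11⁻¹`, `R = I - A12 (A12ᵀ A12)⁻¹ A12ᵀ`
and `Ĩ` such that `R Ĩ` has full column rank: if `ŵ` satisfies `(Πᵀ)^{⊗k} ŵ = ŵ` and
`Π^{⊗k} (L ŵ - b) = 0`, then `M_k^{Ĩ}(A12)ᵀ ŵ = 0` and there exists `Ω` with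
`L ŵ + M_k^{Ĩ}(A12) Ω = b`; i.e. `(ŵ, Ω)` solves the augmented saddle-point system. -/
theorem stmt18 {n1 n2 : ℕ} (E11 : Matrix (Fin n1) (Fin n1) ℝ) (hE : IsUnit E11)
    (A12 : Matrix (Fin n1) (Fin n2) ℝ) (hA : A12.rank = n2)
    (hS : IsUnit (A12ᵀ * E11⁻¹ * A12))
    (Proj : Matrix (Fin n1) (Fin n1) ℝ)
    (hProj : Proj = 1 - A12 * (A12ᵀ * E11⁻¹ * A12)⁻¹ * A12ᵀ * E11⁻¹)
    (R : Matrix (Fin n1) (Fin n1) ℝ)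
    (hR : R = 1 - A12 * (A12ᵀ * A12)⁻¹ * A12ᵀ)
    (Itil : Matrix (Fin n1) (Fin (n1 - n2)) ℝ)
    (hItil : (R * Itil).rank = n1 - n2)
    (k : ℕ) (hk : 0 < k)
    (L : Matrix (Fin k → Fin n1) (Fin k → Fin n1) ℝ)
    (b : (Fin k → Fin n1) → ℝ) (w : (Fin k → Fin n1) → ℝ)
    (hw1 : (kronPow k Projᵀ).mulVec w = w)
    (hw2 : (kronPow k Proj).mulVec (L.mulVec w - b) = 0) :
    (mFull k Itil A12)ᵀ.mulVec w = 0
    ∧ ∃ Ω : (Σ i : Fin k, ∀ j : Fin k, Fin (mCol (n1 - n2) n2 n1 i j)) → ℝ,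
        L.mulVec w + (mFull k Itil A12).mulVec Ω = b := by
  obtain ⟨D, C, hAC, hPProj, hPA⟩ :=
    exists_decomp E11 A12 hA hS Proj hProj R hR Itil hItil
  -- Part 1
  have hAPt : A12ᵀ * Projᵀ = 0 := by
    rw [← Matrix.transpose_mul, hPA, Matrix.transpose_zero]
  have h0 : ∀ (x : Fin n2) (y : Fin n1), ∑ t, A12 t x * Projᵀ t y = 0 := by
    intro x y
    have := congrFun (congrFun hAPt x) y
    simpa [Matrix.mul_apply] using this
  have part1 : (mFull k Itil A12)ᵀ.mulVec w = 0 := by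
    funext x
    obtain ⟨i, c⟩ := x
    have expand : (mFull k Itil A12)ᵀ.mulVec w ⟨i, c⟩
        = ∑ r : Fin k → Fin n1, mBlock Itil A12 i r c * w r := by
      simp [Matrix.mulVec, dotProduct, mFull, Matrix.transpose_apply]
    rw [Pi.zero_apply, expand, ← hw1]
    simp only [Matrix.mulVec, dotProduct]
    simp only [Finset.mul_sum]
    rw [Finset.sum_comm]
    refine Finset.sum_eq_zero fun s _ => ?_
    simp only [← mul_assoc]
    rw [← Finset.sum_mul]
    have key : ∑ r : Fin k → Fin n1, mBlock Itil A12 i r c * kronPow k Projᵀ r s = 0 := by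
      rw [block_mul_kron]
      refine Finset.prod_eq_zero (Finset.mem_univ i) ?_
      have hb : ∀ t, bfac Itil A12 i i (c i) t
          = A12 t (Fin.cast (by simp [mCol]) (c i)) := fun t => bfac_self Itil A12 i (c i) t
      simp only [hb]
      exact h0 _ _
    rw [key, zero_mul]
  refine ⟨part1, ⟨fun x => -∑ s : Fin k → Fin n1,
    (∏ j, gfac D C x.1 j (x.2 j) (s j)) * (L.mulVec w - b) s, ?_⟩⟩
  have hkron0 : (kronPow k (Itil * D)).mulVec (L.mulVec w - b) = 0 := by
    have h1 : kronPow k (Itil * D) = kronPow k (Itil * D) * kronPow k Proj := by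
      rw [kronPow_mul, hPProj]
    rw [h1, ← Matrix.mulVec_mulVec, hw2, Matrix.mulVec_zero]
  have tel := telescope (k := k) (Itil * D) (A12 * C) hAC
  funext r
  rw [Pi.add_apply]
  have hMulV : (mFull k Itil A12).mulVec (fun x => -∑ s : Fin k → Fin n1,
      (∏ j, gfac D C x.1 j (x.2 j) (s j)) * (L.mulVec w - b) s) r = -((L.mulVec w - b) r) := by
    simp only [Matrix.mulVec, dotProduct]
    rw [← Finset.univ_sigma_univ, Finset.sum_sigma]
    simp only [mFull, Matrix.of_apply, mul_neg, Finset.sum_neg_distrib, neg_inj]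
    have step1 : ∀ i : Fin k,
        ∑ c' : (∀ j : Fin k, Fin (mCol (n1 - n2) n2 n1 i j)),
            mBlock Itil A12 i r c' *
              ∑ s : Fin k → Fin n1, (∏ j, gfac D C i j (c' j) (s j)) * (L.mulVec w - b) s
          = ∑ s : Fin k → Fin n1,
              (∏ j, (if j < i then Itil * D else if j = i then A12 * C else 1) (r j) (s j)) *
                (L.mulVec w - b) s := by
      intro i
      simp only [Finset.mul_sum]
      rw [Finset.sum_comm]
      refine Finset.sum_congr rfl fun s _ => ?_
      simp only [← mul_assoc]
      rw [← Finset.sum_mul, block_mul_g]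
    rw [Finset.sum_congr rfl fun i _ => step1 i, Finset.sum_comm]
    simp only [← Finset.sum_mul]
    have step2 : ∀ s, (∑ i : Fin k, ∏ j,
        (if j < i then Itil * D else if j = i then A12 * C else 1) (r j) (s j))
        = (1 : Matrix (Fin k → Fin n1) (Fin k → Fin n1) ℝ) r s - kronPow k (Itil * D) r s := by
      intro s
      have h2 := Matrix.ext_iff.mpr tel r s
      simpa [Matrix.sum_apply, posKron, Matrix.sub_apply] using h2
    calc ∑ s, (∑ i : Fin k, ∏ j,
          (if j < i then Itil * D else if j = i then A12 * C else 1) (r j) (s j)) *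
            (L.mulVec w - b) s
        = ∑ s, ((1 : Matrix (Fin k → Fin n1) (Fin k → Fin n1) ℝ) r s
            - kronPow k (Itil * D) r s) * (L.mulVec w - b) s := by
          exact Finset.sum_congr rfl fun s _ => by rw [step2]
      _ = (∑ s, (1 : Matrix (Fin k → Fin n1) (Fin k → Fin n1) ℝ) r s * (L.mulVec w - b) s)
            - ∑ s, kronPow k (Itil * D) r s * (L.mulVec w - b) s := by
          simp only [sub_mul, Finset.sum_sub_distrib]
      _ = (L.mulVec w - b) r := by
          have e1 : ∑ s, (1 : Matrix (Fin k → Fin n1) (Fin k → Fin n1) ℝ) r s *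
              (L.mulVec w - b) s = (L.mulVec w - b) r := by
            simpa [Matrix.mulVec, dotProduct] using
              congrFun (Matrix.one_mulVec (L.mulVec w - b)) r
          have e2 : ∑ s, kronPow k (Itil * D) r s * (L.mulVec w - b) s = 0 := by
            simpa [Matrix.mulVec, dotProduct] using congrFun hkron0 r
          rw [e1, e2, sub_zero]
  rw [hMulV, Pi.sub_apply]
  ring
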